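/- arXiv:1605.02326 — 3 statements merged into one kernel-verified Lean document; each statement's English description precedes it below -/
import Mathlib

section
/- For γ < 0, λ > 0, θ > 0, the function t ↦ exp(-λ(θ^γ - (θ+t)^γ)) for t ≥ 0 equals ∑_{n=0}^∞ e^{-λθ^γ}(λθ^γ)^n/n! · (1+t/θ)^{γn}, i.e., the Tempered Positive Stable law with negative index γ is a compound Poisson of Gamma random variables: X =_d Gamma(scale 1/θ, shape -γN) where N is Poisson(λθ^γ). -/
theorem stmt_12 (γ lam θ : ℝ) (hγ : γ < 0) (hlam : 0 < lam) (hθ : 0 < θ) :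
    ∀ t : ℝ, 0 ≤ t →
      HasSum
        (fun n : ℕ =>
          Real.exp (-(lam * θ ^ γ)) * (lam * θ ^ γ) ^ n / (Nat.factorial n) *
            (1 + t / θ) ^ (γ * n))
        (Real.exp (-(lam * (θ ^ γ - (θ + t) ^ γ)))) := by
  intro t ht
  have hθt : 0 < θ + t := by linarith
  set r : ℝ := ((θ + t) / θ) ^ γ with hr
  have hbase : (0:ℝ) < (θ + t) / θ := div_pos hθt hθ
  have h1 : 1 + t / θ = (θ + t) / θ := by field_simp
  have hrθ : r * θ ^ γ = (θ + t) ^ γ := by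
    rw [hr, Real.div_rpow hθt.le hθ.le, div_mul_cancel₀]
    exact (Real.rpow_pos_of_pos hθ γ).ne'
  have hexp : HasSum (fun n : ℕ => (lam * θ ^ γ * r) ^ n / n.factorial)
      (Real.exp (lam * θ ^ γ * r)) := by
    rw [Real.exp_eq_exp_ℝ]
    exact NormedSpace.expSeries_div_hasSum_exp _
  have := hexp.mul_left (Real.exp (-(lam * θ ^ γ)))
  rw [← Real.exp_add] at this
  convert this using 2 with n
  · rfl
  · rw [h1, show (lam * θ ^ γ * r) ^ n = (lam * θ ^ γ) ^ n * r ^ n from mul_pow _ _ _,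
      ← Real.rpow_natCast r n, hr, ← Real.rpow_mul hbase.le, mul_comm γ (n:ℝ)]
    ring
  · linear_combination -lam * hrθ
end

section
/- Let g be the Tempered Discrete Linnik p.g.f. with parameters a ≠ 0, a ≤ 1, b > 0, c ∈ (0,1), d > 0, and let μ = sgn(a)abc(1-c)^{a-1}. Then the variance, computed as g''(1) + g'(1) - g'(1)², equals dμ² + (1-ac)μ/(1-c). -/
theorem stmt_17 (a b c d : ℝ) (ha0 : a ≠ 0) (ha1 : a ≤ 1) (hb : 0 < b)
    (hc : c ∈ Set.Ioo (0 : ℝ) 1) (hd : 0 < d)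
    (g : ℝ → ℝ)
    (hg : ∀ s, g s = (1 + Real.sign a * b * d * ((1 - c * s) ^ a - (1 - c) ^ a)) ^ (-(1 / d)))
    (μ : ℝ) (hμ : μ = Real.sign a * a * b * c * (1 - c) ^ (a - 1)) :
    deriv (deriv g) 1 + deriv g 1 - (deriv g 1) ^ 2
      = d * μ ^ 2 + (1 - a * c) * μ / (1 - c) := by
  obtain ⟨hc0, hc1⟩ := hc
  have h1c : (0:ℝ) < 1 - c := by linarith
  set S := Real.sign a with hS
  set K := S * b * d with hK
  set p : ℝ := -(1/d) with hp
  set h : ℝ → ℝ := fun s => 1 + K * ((1 - c * s) ^ a - (1 - c) ^ a) with hh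
  have hgf : g = fun s => h s ^ p := funext hg
  -- derivative of the linear inner map
  have hlin : ∀ s : ℝ, HasDerivAt (fun s : ℝ => 1 - c * s) (-c) s := by
    intro s
    simpa using ((hasDerivAt_id s).const_mul c).const_sub 1
  -- derivative of h
  have hH : ∀ s : ℝ, 0 < 1 - c * s →
      HasDerivAt h (K * (-c * a * (1 - c * s) ^ (a - 1))) s := by
    intro s hs
    have h0 : HasDerivAt (fun s : ℝ => (1 - c * s) ^ a) (-c * a * (1 - c * s) ^ (a - 1)) s :=
      (hlin s).rpow_const (Or.inl hs.ne')
    simpa [hh] using ((h0.sub_const ((1 - c)^a)).const_mul K).const_add 1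
  have hs1 : (0:ℝ) < 1 - c * 1 := by simpa using h1c
  have hh1 : h 1 = 1 := by simp [hh]
  -- eventually positivity
  have hcontlin : Continuous fun s : ℝ => 1 - c * s := by continuity
  have hev1 : ∀ᶠ s in nhds (1:ℝ), 0 < 1 - c * s :=
    hcontlin.continuousAt.eventually_const_lt (by simpa using h1c)
  have hconth : ContinuousAt h 1 := by
    apply (continuousAt_const.add (ContinuousAt.mul continuousAt_const _))
    exact (ContinuousAt.rpow_const hcontlin.continuousAt (Or.inl hs1.ne')).sub continuousAt_const
  have hev2 : ∀ᶠ s in nhds (1:ℝ), 0 < h s :=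
    hconth.eventually_const_lt (by rw [hh1]; norm_num)
  set g1 : ℝ → ℝ := fun s => K * (-c * a * (1 - c * s) ^ (a - 1)) * p * h s ^ (p - 1) with hg1
  have hderivg : ∀ s : ℝ, 0 < 1 - c * s → 0 < h s → HasDerivAt g (g1 s) s := by
    intro s hs hhs
    rw [hgf]
    exact (hH s hs).rpow_const (Or.inl hhs.ne')
  have heq : deriv g =ᶠ[nhds (1:ℝ)] g1 := by
    filter_upwards [hev1, hev2] with s hs hhs
    exact (hderivg s hs hhs).deriv
  have hderiv1 : deriv g 1 = g1 1 := heq.self_of_nhds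
  have hdd : deriv (deriv g) 1 = deriv g1 1 := heq.deriv_eq
  -- derivative of g1 at 1
  have hu : HasDerivAt (fun s : ℝ => (1 - c * s) ^ (a - 1))
      (-c * (a - 1) * (1 - c * 1) ^ (a - 1 - 1)) 1 :=
    (hlin 1).rpow_const (Or.inl hs1.ne')
  have hA : HasDerivAt (fun s : ℝ => K * (-c * a * (1 - c * s) ^ (a - 1)) * p)
      (K * (-c * a * (-c * (a - 1) * (1 - c * 1) ^ (a - 1 - 1))) * p) 1 :=
    ((hu.const_mul (-c * a)).const_mul K).mul_const p
  have hv : HasDerivAt (fun s : ℝ => h s ^ (p - 1))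
      (K * (-c * a * (1 - c * 1) ^ (a - 1)) * (p - 1) * h 1 ^ (p - 1 - 1)) 1 :=
    (hH 1 hs1).rpow_const (Or.inl (by rw [hh1]; norm_num))
  have hg1d : HasDerivAt g1
      (K * (-c * a * (-c * (a - 1) * (1 - c * 1) ^ (a - 1 - 1))) * p * (h 1 ^ (p - 1))
        + K * (-c * a * (1 - c * 1) ^ (a - 1)) * p *
          (K * (-c * a * (1 - c * 1) ^ (a - 1)) * (p - 1) * h 1 ^ (p - 1 - 1))) 1 :=
    hA.mul hv
  rw [hdd, hderiv1, hg1d.deriv, hg1]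
  -- simplify powers of 1 and h 1
  have hone : (1:ℝ) - c * 1 = 1 - c := by ring
  rw [hh1, hone]
  simp only [Real.one_rpow]
  -- algebra
  have hE : (1 - c) ^ (a - 1) = (1 - c) ^ (a - 1 - 1) * (1 - c) := by
    have := Real.rpow_add h1c (a - 1 - 1) 1
    rw [Real.rpow_one] at this
    nth_rewrite 1 [show a - 1 = a - 1 - 1 + 1 by ring]
    rw [this]
  have hSS : S * S = 1 := by
    rcases ha0.lt_or_gt with h | h
    · rw [hS, Real.sign_of_neg h]; norm_num
    · rw [hS, Real.sign_of_pos h]; norm_num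
  rw [hμ, hK, hp, hE]
  set F := (1 - c) ^ (a - 1 - 1) with hF
  have hd0 : d ≠ 0 := hd.ne'
  have h1c0 : (1:ℝ) - c ≠ 0 := h1c.ne'
  field_simp
  ring_nf
  have hO : (1:ℝ) ^ (-(d*d⁻¹) - d⁻¹) = 1 := Real.one_rpow _
  have hX : ((1:ℝ)-c) ^ (-1+a) = F * (1-c) := by
    rw [show (-1+a : ℝ) = (a-1-1)+1 by ring, Real.rpow_add h1c, Real.rpow_one, hF]
  rw [hh1, hO, hX]
  rcases ha0.lt_or_gt with hneg | hpos
  · rw [show S = -1 from by rw [hS, Real.sign_of_neg hneg]]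
    ring
  · rw [show S = 1 from by rw [hS, Real.sign_of_pos hpos]]
    ring
end

section
/- Let φ be analytic in a neighbourhood of α+β and let X be a nonnegative integer-valued random variable with p.g.f. g_X(s) = φ(α + β(1-φ₀s)^γ), with φ₀ ∈ [0,1] and γ, α, β real. Then for every k ∈ ℕ, P(X = k) = (-φ₀)^k ∑_{m=0}^{k} ((-β)^m/m!) φ^{(m)}(α+β) C_{γ,m}(k), where C_{γ,m}(k) = ∑_{j=0}^{m} (-1)^j binom(m,j) binom(γj,k). -/
noncomputable def rchoose (x : ℝ) (k : ℕ) : ℝ :=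
  (∏ i ∈ Finset.range k, (x - i)) / (Nat.factorial k)

noncomputable def C (γ : ℝ) (m k : ℕ) : ℝ :=
  ∑ j ∈ Finset.range (m + 1), (-1 : ℝ) ^ j * (m.choose j) * rchoose (γ * j) k

open Filter Topology


lemma L1 {f : ℝ → ℝ} {p : FormalMultilinearSeries ℝ ℝ ℝ} {x : ℝ}
    (h : HasFPowerSeriesAt f p x) (n : ℕ) :
    iteratedDeriv n f x = (Nat.factorial n : ℝ) * p.coeff n := by
  obtain ⟨r, h⟩ := h
  have h2 := h.factorial_smul (1 : ℝ) n
  rw [iteratedDeriv_eq_iteratedFDeriv, ← h2, FormalMultilinearSeries.coeff,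
    nsmul_eq_mul]
  rfl

-- additivity of iteratedDeriv at a point for analytic functions
lemma L2 {f g : ℝ → ℝ} {x : ℝ} (hf : AnalyticAt ℝ f x) (hg : AnalyticAt ℝ g x) (n : ℕ) :
    iteratedDeriv n (fun s => f s + g s) x = iteratedDeriv n f x + iteratedDeriv n g x := by
  obtain ⟨p, hp⟩ := hf
  obtain ⟨q, hq⟩ := hg
  have hpq := hp.add hq
  rw [L1 hp, L1 hq, show (fun s => f s + g s) = f + g from rfl, L1 hpq]
  have : (p + q).coeff n = p.coeff n + q.coeff n := rfl
  rw [this]; ring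

-- const mul
lemma L4 {f : ℝ → ℝ} {x a : ℝ} (hf : AnalyticAt ℝ f x) (n : ℕ) :
    iteratedDeriv n (fun s => a * f s) x = a * iteratedDeriv n f x := by
  obtain ⟨p, r, hp⟩ := hf
  set L : ℝ →L[ℝ] ℝ := a • ContinuousLinearMap.id ℝ ℝ with hL
  have h2 := L.comp_hasFPowerSeriesOnBall hp
  have hfun : ⇑L ∘ f = fun s => a * f s := by
    funext s; simp [hL]
  rw [hfun] at h2
  rw [L1 ⟨r, hp⟩, L1 ⟨r, h2⟩]
  have : (L.compFormalMultilinearSeries p).coeff n = a * p.coeff n := by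
    rw [FormalMultilinearSeries.coeff, FormalMultilinearSeries.coeff,
      ContinuousLinearMap.compFormalMultilinearSeries_apply,
      ContinuousLinearMap.compContinuousMultilinearMap_coe, Function.comp_apply, hL]
    simp
  rw [this]; ring

-- vanishing of derivatives from bigO
lemma LB {f : ℝ → ℝ} {k : ℕ} (hf : AnalyticAt ℝ f 0)
    (hO : f =O[𝓝 (0:ℝ)] (fun s => |s| ^ (k+1))) :
    ∀ m, m ≤ k → iteratedDeriv m f 0 = 0 := by
  obtain ⟨p, hp⟩ := hf
  suffices h : ∀ m, m ≤ k → p.coeff m = 0 by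
    intro m hm
    rw [L1 hp, h m hm, mul_zero]
  intro m
  induction m using Nat.strong_induction_on with
  | _ m ih =>
    intro hm
    have h1 := hp.isBigO_sub_partialSum_pow (m+1)
    have hps : ∀ y : ℝ, p.partialSum (m+1) y = p.coeff m * y ^ m := by
      intro y
      rw [FormalMultilinearSeries.partialSum]
      rw [Finset.sum_eq_single_of_mem m (Finset.self_mem_range_succ m)]
      · rw [FormalMultilinearSeries.apply_eq_pow_smul_coeff, smul_eq_mul]; ring
      · intro i hi hne
        have hilt : i < m := lt_of_le_of_ne (Nat.lt_succ_iff.mp (Finset.mem_range.mp hi)) hne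
        rw [FormalMultilinearSeries.apply_eq_pow_smul_coeff,
          ih i hilt (le_trans hilt.le hm), smul_zero]
    -- f =O |y|^{m+1}
    have h2 : (fun y : ℝ => |y| ^ (k+1)) =O[𝓝 (0:ℝ)] (fun y : ℝ => |y| ^ (m+1)) := by
      rw [Asymptotics.isBigO_iff]
      refine ⟨1, ?_⟩
      have hone : ∀ᶠ y : ℝ in 𝓝 0, |y| ≤ 1 := by
        have : Set.Icc (-1 : ℝ) 1 ∈ 𝓝 (0:ℝ) := Icc_mem_nhds (by norm_num) (by norm_num)
        filter_upwards [this] with y hy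
        rw [abs_le]; exact hy
      filter_upwards [hone] with y hy
      rw [one_mul]
      have : |y| ^ (k+1) ≤ |y| ^ (m+1) :=
        pow_le_pow_of_le_one (abs_nonneg y) hy (by omega)
      calc ‖|y| ^ (k+1)‖ = |y| ^ (k+1) := by
              rw [Real.norm_eq_abs, abs_of_nonneg (pow_nonneg (abs_nonneg y) _)]
        _ ≤ |y| ^ (m+1) := this
        _ ≤ ‖|y| ^ (m+1)‖ := le_abs_self _
    have h3 : (fun y : ℝ => p.coeff m * y ^ m) =O[𝓝 (0:ℝ)] (fun y : ℝ => |y| ^ (m+1)) := by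
      have : (fun y : ℝ => p.coeff m * y ^ m)
          = fun y : ℝ => f (0 + y) - (f (0 + y) - p.partialSum (m+1) y) := by
        funext y; rw [hps y]; ring
      rw [this]
      have hfO : (fun y : ℝ => f (0 + y)) =O[𝓝 (0:ℝ)] (fun y : ℝ => |y| ^ (m+1)) := by
        simpa [zero_add] using hO.trans h2
      have h1' : (fun y : ℝ => f (0 + y) - p.partialSum (m+1) y)
          =O[𝓝 (0:ℝ)] (fun y : ℝ => |y| ^ (m+1)) := by
        refine h1.trans ?_
        apply Asymptotics.isBigO_of_le
        intro y
        simp [Real.norm_eq_abs, abs_pow, abs_abs, le_refl]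
      exact hfO.sub h1'
    -- conclude coeff m = 0
    rw [Asymptotics.isBigO_iff] at h3
    obtain ⟨c, hc⟩ := h3
    have key : ∀ᶠ y : ℝ in 𝓝[≠] (0:ℝ), |p.coeff m| ≤ c * |y| := by
      rw [eventually_nhdsWithin_iff]
      filter_upwards [hc] with y hy hy0
      rw [Real.norm_eq_abs, Real.norm_eq_abs, abs_mul, abs_pow,
        abs_of_nonneg (pow_nonneg (abs_nonneg y) _), pow_succ] at hy
      have hym : 0 < |y| ^ m := pow_pos (abs_pos.mpr hy0) m
      have hy' : |p.coeff m| * |y| ^ m ≤ (c * |y|) * |y| ^ m := by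
        calc |p.coeff m| * |y| ^ m ≤ c * (|y| ^ m * |y|) := hy
          _ = (c * |y|) * |y| ^ m := by ring
      exact le_of_mul_le_mul_right hy' hym
    have hlim : Filter.Tendsto (fun y : ℝ => c * |y|) (𝓝[≠] (0:ℝ)) (𝓝 0) := by
      have : Filter.Tendsto (fun y : ℝ => c * |y|) (𝓝 (0:ℝ)) (𝓝 (c * |(0:ℝ)|)) :=
        (continuous_const.mul continuous_abs).tendsto 0
      simpa using this.mono_left nhdsWithin_le_nhds
    have : |p.coeff m| ≤ 0 := ge_of_tendsto hlim key
    exact abs_eq_zero.mp (le_antisymm this (abs_nonneg _))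

-- iterated derivative of s ↦ (1 - φ₀ s) ^ p on the region where the base is positive
lemma LD (φ₀ p : ℝ) : ∀ k : ℕ, ∀ s : ℝ, 1 - φ₀*s > 0 →
    iteratedDeriv k (fun t => (1 - φ₀*t) ^ p) s
      = (∏ i ∈ Finset.range k, (p - i)) * (-φ₀)^k * (1 - φ₀*s) ^ (p - k) := by
  intro k
  induction k with
  | zero => intro s hs; simp [iteratedDeriv_zero]
  | succ k ih =>
    intro s hs
    rw [iteratedDeriv_succ]
    have hU : IsOpen {t : ℝ | 1 - φ₀*t > 0} :=
      isOpen_lt (by fun_prop) (by fun_prop)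
    have hmem : {t : ℝ | 1 - φ₀*t > 0} ∈ 𝓝 s := hU.mem_nhds hs
    have heq : iteratedDeriv k (fun t => (1 - φ₀*t) ^ p)
        =ᶠ[𝓝 s] fun t => (∏ i ∈ Finset.range k, (p - i)) * (-φ₀)^k * (1 - φ₀*t) ^ (p - k) := by
      filter_upwards [hmem] with t ht
      exact ih t ht
    rw [heq.deriv_eq]
    have hin : HasDerivAt (fun t : ℝ => 1 - φ₀*t) (-φ₀) s := by
      simpa using ((hasDerivAt_id s).const_mul φ₀).const_sub 1
    have hrp : HasDerivAt (fun x : ℝ => x ^ (p - k))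
        ((p - k) * (1 - φ₀*s) ^ (p - k - 1)) (1 - φ₀*s) :=
      Real.hasDerivAt_rpow_const (Or.inl (ne_of_gt hs))
    have hcomp := (hrp.comp s hin).const_mul
      ((∏ i ∈ Finset.range k, (p - i)) * (-φ₀)^k)
    rw [show (fun t : ℝ => (∏ i ∈ Finset.range k, (p - (i:ℝ))) * (-φ₀)^k * (1 - φ₀*t) ^ (p - (k:ℝ)))
        = (fun y => (∏ i ∈ Finset.range k, (p - (i:ℝ))) * (-φ₀) ^ k * ((fun x => x ^ (p - (k:ℝ))) ∘ fun t => 1 - φ₀ * t) y) from rfl,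
      hcomp.deriv, Finset.prod_range_succ]
    push_cast
    rw [show p - ((k:ℝ) + 1) = p - (k:ℝ) - 1 from by ring]
    ring

-- real log is analytic at positive points
lemma Llog {x : ℝ} (hx : 0 < x) : AnalyticAt ℝ Real.log x := by
  have h1 : AnalyticAt ℂ Complex.log (x : ℂ) :=
    analyticAt_clog (Complex.ofReal_mem_slitPlane.mpr hx)
  have h2 : AnalyticAt ℝ (fun z : ℂ => Complex.log z) (x : ℂ) := h1.restrictScalars
  have h3 : AnalyticAt ℝ (fun t : ℝ => (Complex.log (t : ℂ)).re) x := by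
    have hre : AnalyticAt ℝ (fun z : ℂ => z.re) (Complex.log (x:ℂ)) :=
      Complex.reCLM.analyticAt _
    have hof : AnalyticAt ℝ (fun t : ℝ => (t : ℂ)) x := Complex.ofRealCLM.analyticAt _
    exact AnalyticAt.comp (f := fun t : ℝ => Complex.log (t:ℂ)) hre (h2.comp hof)
  apply h3.congr
  have : {t : ℝ | 0 < t} ∈ 𝓝 x := (isOpen_lt continuous_const continuous_id).mem_nhds hx
  filter_upwards [this] with t ht
  rw [← Complex.ofReal_log ht.le, Complex.ofReal_re]

-- (1 - φ₀ s)^p analytic where base positive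
lemma Lrpow (φ₀ p : ℝ) {s₀ : ℝ} (hs : 1 - φ₀*s₀ > 0) :
    AnalyticAt ℝ (fun s => (1 - φ₀*s) ^ p) s₀ := by
  have hb : AnalyticAt ℝ (fun s : ℝ => 1 - φ₀*s) s₀ :=
    analyticAt_const.sub (analyticAt_const.mul analyticAt_id)
  have hexp : AnalyticAt ℝ (fun s : ℝ => Real.exp (p * Real.log (1 - φ₀*s))) s₀ := by
    apply analyticAt_rexp.comp
    exact analyticAt_const.mul
      (AnalyticAt.comp (f := fun s : ℝ => 1 - φ₀*s) (Llog hs) hb)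
  apply hexp.congr
  have hmem : {t : ℝ | 1 - φ₀*t > 0} ∈ 𝓝 s₀ :=
    (isOpen_lt (by fun_prop) (by fun_prop)).mem_nhds hs
  filter_upwards [hmem] with t ht
  rw [Real.rpow_def_of_pos ht, mul_comm]

lemma Lconst (n : ℕ) (c x : ℝ) : iteratedDeriv n (fun _ : ℝ => c) x = if n = 0 then c else 0 := by
  induction n generalizing c x with
  | zero => simp
  | succ n ih =>
    rw [iteratedDeriv_succ']
    simp only [deriv_const']
    rw [ih]
    simp

-- finite sums
lemma L3 {ι : Type*} (F : Finset ι) (f : ι → ℝ → ℝ) {x : ℝ}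
    (h : ∀ i ∈ F, AnalyticAt ℝ (f i) x) (n : ℕ) :
    iteratedDeriv n (fun s => ∑ i ∈ F, f i s) x = ∑ i ∈ F, iteratedDeriv n (f i) x := by
  induction F using Finset.cons_induction with
  | empty => simp [Lconst n 0 x]
  | cons a F ha ih =>
    rw [Finset.sum_cons]
    have h1 : AnalyticAt ℝ (f a) x := h a (Finset.mem_cons_self a F)
    have h2 : AnalyticAt ℝ (fun s => ∑ i ∈ F, f i s) x :=
      F.analyticAt_fun_sum (fun i hi => h i (Finset.mem_cons_of_mem hi))
    have := L2 h1 h2 n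
    simp only [Finset.sum_cons]
    rw [this, ih (fun i hi => h i (Finset.mem_cons_of_mem hi))]

lemma Lterm (φ₀ γ β a : ℝ) (m k : ℕ) :
    iteratedDeriv k (fun s => a * (β * ((1 - φ₀*s) ^ γ - 1))^m) 0
      = ∑ j ∈ Finset.range (m+1),
          (a * β^m * (-1:ℝ)^(m-j) * (m.choose j))
            * ((Nat.factorial k : ℝ) * rchoose (γ*j) k * (-φ₀)^k) := by
  have h0 : (1:ℝ) - φ₀*0 > 0 := by norm_num
  have hmem : {t : ℝ | 1 - φ₀*t > 0} ∈ 𝓝 (0:ℝ) :=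
    (isOpen_lt (by fun_prop) (by fun_prop)).mem_nhds h0
  have heq : (fun s => a * (β * ((1 - φ₀*s) ^ γ - 1))^m)
      =ᶠ[𝓝 (0:ℝ)] fun s => ∑ j ∈ Finset.range (m+1),
        (a * β^m * (-1:ℝ)^(m-j) * (m.choose j)) * (1 - φ₀*s) ^ (γ*(j:ℕ)) := by
    filter_upwards [hmem] with t ht
    have hpow : ∀ j : ℕ, ((1 - φ₀*t) ^ γ) ^ j = (1 - φ₀*t) ^ (γ*(j:ℕ)) := by
      intro j
      rw [Real.rpow_mul ht.le, ← Real.rpow_natCast ((1 - φ₀*t) ^ γ) j]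
    rw [mul_pow]
    rw [show (1 - φ₀*t) ^ γ - 1 = (1 - φ₀*t) ^ γ + (-1) from by ring, add_pow]
    rw [Finset.mul_sum, Finset.mul_sum]
    apply Finset.sum_congr rfl
    intro j hj
    rw [hpow j]
    ring
  rw [heq.iteratedDeriv_eq k]
  rw [L3 (Finset.range (m+1))
    (fun j => fun s => a * β^m * (-1:ℝ)^(m-j) * (m.choose j) * (1 - φ₀*s) ^ (γ*(j:ℕ)))
    (fun j hj => analyticAt_const.mul (Lrpow φ₀ (γ*j) h0)) k]
  apply Finset.sum_congr rfl
  intro j hj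
  rw [show (fun s => a * β^m * (-1:ℝ)^(m-j) * (m.choose j) * (1 - φ₀*s) ^ (γ*(j:ℕ)))
      = (fun s => (a * β^m * (-1:ℝ)^(m-j) * (m.choose j)) * (1 - φ₀*s) ^ (γ*(j:ℕ))) from rfl,
    L4 (Lrpow φ₀ (γ*j) h0) k, LD φ₀ (γ*j) k 0 h0]
  rw [show (1:ℝ) - φ₀*0 = 1 from by ring, Real.one_rpow]
  rw [rchoose]
  field_simp

theorem stmt_19 (φ : ℝ → ℝ) (γ α β φ₀ : ℝ) (hφ₀ : φ₀ ∈ Set.Icc (0 : ℝ) 1)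
    (hφ : AnalyticAt ℝ φ (α + β))
    (g : ℝ → ℝ) (hg : ∀ s, g s = φ (α + β * (1 - φ₀ * s) ^ γ))
    (P : ℕ → ℝ) (hP : ∀ k, P k = iteratedDeriv k g 0 / (Nat.factorial k)) :
    ∀ k : ℕ,
      P k = (-φ₀) ^ k *
        ∑ m ∈ Finset.range (k + 1),
          ((-β) ^ m / (Nat.factorial m)) * iteratedDeriv m φ (α + β) * C γ m k := by
  intro k
  have h0 : (1:ℝ) - φ₀*0 > 0 := by norm_num
  set c : ℝ := α + β with hc
  set w : ℝ → ℝ := fun s => β * ((1 - φ₀*s) ^ γ - 1) with hw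
  have hw0 : w 0 = 0 := by
    rw [hw]; simp [Real.one_rpow]
  have hwA : AnalyticAt ℝ w 0 := by
    rw [hw]; exact analyticAt_const.mul ((Lrpow φ₀ γ h0).sub analyticAt_const)
  have hgw : ∀ s, g s = φ (c + w s) := by
    intro s
    rw [hg s, hw, hc]
    congr 1
    ring
  set cm : ℕ → ℝ := fun m => iteratedDeriv m φ c / (Nat.factorial m) with hcm
  set A : ℝ → ℝ := fun s => ∑ m ∈ Finset.range (k+1), cm m * (w s)^m with hA
  set E : ℝ → ℝ := fun s => g s - A s with hE
  have hgA : AnalyticAt ℝ g 0 := by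
    have h1 : AnalyticAt ℝ (fun s => c + w s) 0 := analyticAt_const.add hwA
    have h2 : AnalyticAt ℝ φ (c + w 0) := by rw [hw0, add_zero]; exact hφ
    have h3 := AnalyticAt.comp (g := φ) (f := fun s => c + w s) h2 h1
    exact h3.congr (Filter.Eventually.of_forall fun s => ((hgw s).symm : φ (c + w s) = g s))
  have hterms : ∀ m ∈ Finset.range (k+1), AnalyticAt ℝ (fun s => cm m * (w s)^m) 0 :=
    fun m _ => analyticAt_const.mul (hwA.pow m)
  have hAA : AnalyticAt ℝ A 0 := by rw [hA]; exact Finset.analyticAt_fun_sum _ hterms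
  have hEA : AnalyticAt ℝ E 0 := by rw [hE]; exact hgA.sub hAA
  obtain ⟨p, hp⟩ := hφ
  have hcoeff : ∀ m, cm m = p.coeff m := by
    intro m
    rw [hcm]
    simp only []
    rw [L1 hp m]
    field_simp
  have hpartial : ∀ y : ℝ, p.partialSum (k+1) y = ∑ m ∈ Finset.range (k+1), cm m * y^m := by
    intro y
    rw [FormalMultilinearSeries.partialSum]
    apply Finset.sum_congr rfl
    intro m _
    rw [FormalMultilinearSeries.apply_eq_pow_smul_coeff, smul_eq_mul, hcoeff m]
    ring
  have hEO : E =O[𝓝 (0:ℝ)] fun s => |s|^(k+1) := by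
    have h1 := hp.isBigO_sub_partialSum_pow (k+1)
    have hwT : Filter.Tendsto w (𝓝 0) (𝓝 0) := by
      have := hwA.continuousAt.tendsto
      rwa [hw0] at this
    have h2 := h1.comp_tendsto hwT
    have h3 : E = fun s => φ (c + w s) - p.partialSum (k+1) (w s) := by
      funext s
      rw [hE]
      simp only []
      rw [hgw s, hpartial (w s), hA]
    have hwO : w =O[𝓝 (0:ℝ)] (fun s : ℝ => s) := by
      have := hwA.differentiableAt.hasFDerivAt.isBigO_sub
      simpa [hw0] using this
    have h4 : E =O[𝓝 (0:ℝ)] fun s => (w s)^(k+1) := by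
      rw [h3]
      refine h2.trans ?_
      apply Asymptotics.isBigO_of_le
      intro s
      simp [Real.norm_eq_abs, abs_pow, abs_abs, le_refl]
    have h5 : E =O[𝓝 (0:ℝ)] fun s => s^(k+1) := h4.trans (hwO.pow (k+1))
    have h6 := h5.norm_right
    have : (fun s : ℝ => ‖s^(k+1)‖) = fun s : ℝ => |s|^(k+1) := by
      funext s; rw [Real.norm_eq_abs, abs_pow]
    rwa [this] at h6
  have hEk : iteratedDeriv k E 0 = 0 := LB hEA hEO k le_rfl
  have hsplit : iteratedDeriv k g 0 = iteratedDeriv k A 0 + iteratedDeriv k E 0 := by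
    have hgAE : g = fun s => A s + E s := by
      funext s; rw [hE]; simp only []; ring
    rw [hgAE, L2 hAA hEA]
  rw [hEk, add_zero] at hsplit
  have hAval : iteratedDeriv k A 0
      = ∑ m ∈ Finset.range (k+1), ∑ j ∈ Finset.range (m+1),
          (cm m * β^m * (-1:ℝ)^(m-j) * (m.choose j))
            * ((Nat.factorial k : ℝ) * rchoose (γ*j) k * (-φ₀)^k) := by
    rw [hA, L3 _ _ hterms k]
    apply Finset.sum_congr rfl
    intro m _
    rw [hw]
    exact Lterm φ₀ γ β (cm m) m k
  rw [hP k, hsplit, hAval, Finset.sum_div, Finset.mul_sum]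
  apply Finset.sum_congr rfl
  intro m hm
  rw [C, Finset.sum_div, Finset.mul_sum, Finset.mul_sum]
  apply Finset.sum_congr rfl
  intro j hj
  have hjm : j ≤ m := Nat.lt_succ_iff.mp (Finset.mem_range.mp hj)
  have hsgn : (-1:ℝ)^(m-j) * (-1:ℝ)^j = (-1:ℝ)^m := by
    rw [← pow_add]
    congr 1
    omega
  have hkfac : (Nat.factorial k : ℝ) ≠ 0 := Nat.cast_ne_zero.mpr (Nat.factorial_ne_zero k)
  have hmfac : (Nat.factorial m : ℝ) ≠ 0 := Nat.cast_ne_zero.mpr (Nat.factorial_ne_zero m)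
  rw [hcm]
  simp only []
  have hjj : (-1:ℝ)^j * (-1:ℝ)^j = 1 := by
    rw [← pow_add, ← two_mul, pow_mul]
    norm_num
  rw [show (-1:ℝ)^(m-j) = (-1:ℝ)^m * (-1:ℝ)^j from by
    rw [← hsgn, mul_assoc, hjj, mul_one]]
  rw [neg_pow β m]
  field_simp
end
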